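/- Let $m > 1$. For all real numbers $a, b$ one has $(a - b)(a^{[m]} - b^{[m]}) \ge \frac{4m}{(m+1)^2} \big| a^{[(m+1)/2]} - b^{[(m+1)/2]} \big|^2$, where $r^{[p]} := |r|^{p-1} r$. -/

import Mathlib

noncomputable def opow (r p : ℝ) : ℝ := |r| ^ (p - 1) * r

open intervalIntegral MeasureTheory Filter

lemma continuous_abs_rpow (p : ℝ) (hp : 0 < p) : Continuous (fun x : ℝ => |x| ^ p) :=
  continuous_abs.rpow_const fun _ => Or.inr hp.le

lemma hasDerivAt_opow {p : ℝ} (hp : 1 < p) (x : ℝ) :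
    HasDerivAt (fun r => opow r p) (p * |x| ^ (p - 1)) x := by
  rcases lt_trichotomy x 0 with hx | hx | hx
  · have h1 : HasDerivAt (fun r : ℝ => -((-r) ^ p)) (p * |x| ^ (p - 1)) x := by
      have h2 : HasDerivAt (fun r : ℝ => (-r) ^ p) (p * (-x) ^ (p - 1) * (-1)) x :=
        (Real.hasDerivAt_rpow_const (p := p) (x := -x)
          (Or.inl (by linarith))).comp x (hasDerivAt_neg x)
      have : HasDerivAt (fun r : ℝ => -((-r) ^ p)) (-(p * (-x) ^ (p - 1) * (-1))) x := h2.neg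
      convert this using 1
      rw [abs_of_neg hx]; ring
    apply h1.congr_of_eventuallyEq
    filter_upwards [Iio_mem_nhds hx] with r hr
    simp only [Set.mem_Iio] at hr
    unfold opow
    have hrp : (-r : ℝ) ^ p = (-r) ^ (p - 1) * (-r) := by
      rw [← Real.rpow_add_one (neg_ne_zero.mpr (ne_of_lt hr)) (p - 1)]; norm_num
    rw [abs_of_neg hr, hrp]; ring
  · subst hx
    rw [hasDerivAt_iff_tendsto_slope]
    have hcont : Tendsto (fun r : ℝ => |r| ^ (p - 1)) (nhdsWithin 0 {(0:ℝ)}ᶜ) (nhds 0) := by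
      have : Tendsto (fun r : ℝ => |r| ^ (p - 1)) (nhds 0) (nhds (|((0:ℝ))| ^ (p - 1))) :=
        (continuous_abs_rpow (p - 1) (by linarith)).continuousAt
      simp only [abs_zero, Real.zero_rpow (by linarith : p - 1 ≠ 0)] at this
      exact this.mono_left nhdsWithin_le_nhds
    have hval : p * |(0:ℝ)| ^ (p - 1) = 0 := by
      simp [Real.zero_rpow (by linarith : p - 1 ≠ 0)]
    rw [hval]
    apply hcont.congr'
    filter_upwards [self_mem_nhdsWithin] with r hr
    simp only [Set.mem_compl_iff, Set.mem_singleton_iff] at hr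
    rw [slope_def_field]
    unfold opow
    simp only [abs_zero, Real.zero_rpow (by linarith : p - 1 ≠ 0), mul_zero, sub_zero]
    rw [mul_div_assoc, div_self hr, mul_one]
  · have h1 : HasDerivAt (fun r : ℝ => r ^ p) (p * |x| ^ (p - 1)) x := by
      have := Real.hasDerivAt_rpow_const (p := p) (x := x) (Or.inl hx.ne')
      rwa [abs_of_pos hx]
    apply h1.congr_of_eventuallyEq
    filter_upwards [Ioi_mem_nhds hx] with r hr
    simp only [Set.mem_Ioi] at hr
    unfold opow
    have hrp : r ^ p = r ^ (p - 1) * r := by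
      rw [← Real.rpow_add_one hr.ne' (p - 1)]; norm_num
    rw [abs_of_pos hr, hrp]

lemma ftc_opow {p : ℝ} (hp : 1 < p) (a b : ℝ) :
    opow a p - opow b p = ∫ x in b..a, p * |x| ^ (p - 1) := by
  rw [intervalIntegral.integral_eq_sub_of_hasDerivAt (fun x _ => hasDerivAt_opow hp x)]
  exact ((continuous_const.mul (continuous_abs_rpow (p - 1) (by linarith)))).intervalIntegrable _ _

lemma cs_interval {f : ℝ → ℝ} (hf : Continuous f) {a b : ℝ} (h : b ≤ a) :
    (∫ x in b..a, f x) ^ 2 ≤ (a - b) * ∫ x in b..a, f x ^ 2 := by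
  rcases eq_or_lt_of_le h with rfl | h
  · simp
  have hab : 0 < a - b := by linarith
  set J := ∫ x in b..a, f x with hJ
  set S := ∫ x in b..a, f x ^ 2 with hS
  have hint1 : IntervalIntegrable f volume b a := hf.intervalIntegrable _ _
  have hint2 : IntervalIntegrable (fun x => f x ^ 2) volume b a :=
    (hf.pow 2).intervalIntegrable _ _
  have hq : ∀ t : ℝ, 0 ≤ (a - b) * (t * t) + (-2 * J) * t + S := by
    intro t
    rw [show t * t = t ^ 2 from (sq t).symm]
    have hnn : 0 ≤ ∫ x in b..a, (f x - t) ^ 2 :=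
      intervalIntegral.integral_nonneg h.le (fun x _ => sq_nonneg _)
    have hexp : (∫ x in b..a, (f x - t) ^ 2)
        = S - 2 * t * J + t ^ 2 * (a - b) := by
      have he : ∀ x, (f x - t) ^ 2 = f x ^ 2 - (2 * t) * f x + t ^ 2 := fun x => by ring
      simp_rw [he]
      rw [intervalIntegral.integral_add (hint2.sub (hint1.const_mul _)) intervalIntegrable_const,
        intervalIntegral.integral_sub hint2 (hint1.const_mul _),
        intervalIntegral.integral_const_mul, intervalIntegral.integral_const, ← hJ, ← hS,
        smul_eq_mul]
      ring
    rw [hexp] at hnn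
    linarith
  have hd := discrim_le_zero hq
  rw [discrim] at hd
  nlinarith [hd]

lemma key (m : ℝ) (hm : 1 < m) (a b : ℝ) (h : b ≤ a) :
    4 * m / (m + 1) ^ 2 * |opow a ((m + 1) / 2) - opow b ((m + 1) / 2)| ^ 2
      ≤ (a - b) * (opow a m - opow b m) := by
  set c : ℝ := (m + 1) / 2 with hc
  have hc1 : 1 < c := by rw [hc]; linarith
  have hF : opow a m - opow b m = m * ∫ x in b..a, |x| ^ (m - 1) := by
    rw [ftc_opow hm a b, intervalIntegral.integral_const_mul]
  have hG : opow a c - opow b c = c * ∫ x in b..a, |x| ^ (c - 1) := by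
    rw [ftc_opow hc1 a b, intervalIntegral.integral_const_mul]
  set I1 := ∫ x in b..a, |x| ^ (m - 1) with hI1
  set I2 := ∫ x in b..a, |x| ^ (c - 1) with hI2
  have hcs : I2 ^ 2 ≤ (a - b) * I1 := by
    have hcseq := cs_interval (f := fun x => |x| ^ (c - 1))
      (continuous_abs_rpow (c - 1) (by linarith)) h
    have heq : (∫ x in b..a, (fun x : ℝ => |x| ^ (c - 1)) x ^ 2) = I1 := by
      rw [hI1]
      apply intervalIntegral.integral_congr
      intro x _
      show (|x| ^ (c - 1)) ^ (2 : ℕ) = |x| ^ (m - 1)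
      rw [← Real.rpow_natCast (|x| ^ (c - 1)) 2, ← Real.rpow_mul (abs_nonneg x)]
      congr 1
      push_cast
      rw [hc]; ring
    rw [heq] at hcseq
    exact hcseq
  have habs : |opow a c - opow b c| ^ 2 = c ^ 2 * I2 ^ 2 := by
    rw [sq_abs, hG]; ring
  rw [habs, hF]
  have hcoef : 4 * m / (m + 1) ^ 2 * c ^ 2 = m := by
    rw [hc]; field_simp; ring
  calc 4 * m / (m + 1) ^ 2 * (c ^ 2 * I2 ^ 2) = m * I2 ^ 2 := by
        rw [← mul_assoc, hcoef]
    _ ≤ m * ((a - b) * I1) := mul_le_mul_of_nonneg_left hcs (by linarith)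
    _ = (a - b) * (m * I1) := by ring

theorem stmt5 (m : ℝ) (hm : 1 < m) (a b : ℝ) :
    4 * m / (m + 1) ^ 2 * |opow a ((m + 1) / 2) - opow b ((m + 1) / 2)| ^ 2
      ≤ (a - b) * (opow a m - opow b m) := by
  rcases le_total b a with h | h
  · exact key m hm a b h
  · calc 4 * m / (m + 1) ^ 2 * |opow a ((m + 1) / 2) - opow b ((m + 1) / 2)| ^ 2
        = 4 * m / (m + 1) ^ 2 * |opow b ((m + 1) / 2) - opow a ((m + 1) / 2)| ^ 2 := by
          rw [abs_sub_comm]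
      _ ≤ (b - a) * (opow b m - opow a m) := key m hm b a h
      _ = (a - b) * (opow a m - opow b m) := by ring
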